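/- Let K ≥ 2, σ² > 0, 0 < C_1 ≤ C_2 ≤ … ≤ C_K, and D_k ∈ (0,1) for 1 ≤ k ≤ K. Let a*_k(θ) = D_k·(θ − Σ_{i=1}^{k−1} a*_i(θ)) + D_k·σ²/C_k for k ≤ K−1, a*_K(θ) = θ − Σ_{i=1}^{K−1} a*_i(θ), and x*_k(θ) := Σ_{i=k+1}^K a*_i(θ). Then the function N(θ) := log₂(C_1·θ + σ²) + Σ_{k=1}^{K−1} [ log₂(C_{k+1}·x*_k(θ) + σ²) − log₂(C_k·x*_k(θ) + σ²) ] is strictly concave on every interval I ⊆ { θ : θ > 0 and x*_k(θ) ≥ 0 for all 1 ≤ k ≤ K−1 }. -/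

import Mathlib

open Real Set Finset

lemma aux_hasDerivAt_logaff (a c x : ℝ) (h : 0 < a * x + c) :
    HasDerivAt (fun y => Real.log (a * y + c)) (a / (a * x + c)) x := by
  have h1 : HasDerivAt (fun y : ℝ => a * y + c) a x := by
    simpa using ((hasDerivAt_id x).const_mul a).add_const c
  simpa using h1.log h.ne'

lemma aux_concave_diff_log (a b c : ℝ) (hb : 0 < b) (hba : b ≤ a) (hc : 0 < c) :
    ConcaveOn ℝ (Set.Ici (0:ℝ))
      (fun x => Real.log (a * x + c) - Real.log (b * x + c)) := by
  have ha : 0 < a := hb.trans_le hba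
  have hpa : ∀ x : ℝ, 0 ≤ x → 0 < a * x + c := fun x hx => by positivity
  have hpb : ∀ x : ℝ, 0 ≤ x → 0 < b * x + c := fun x hx => by positivity
  have hder : ∀ x ∈ interior (Set.Ici (0:ℝ)),
      HasDerivAt (fun y => Real.log (a * y + c) - Real.log (b * y + c))
        (a / (a * x + c) - b / (b * x + c)) x := by
    intro x hx
    rw [interior_Ici] at hx
    exact (aux_hasDerivAt_logaff a c x (hpa x (le_of_lt hx))).sub
      (aux_hasDerivAt_logaff b c x (hpb x (le_of_lt hx)))
  refine AntitoneOn.concaveOn_of_deriv (convex_Ici 0) ?_ ?_ ?_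
  · refine ContinuousOn.sub ?_ ?_
    · refine (ContinuousOn.log (by fun_prop) ?_)
      intro x hx; exact (hpa x hx).ne'
    · refine (ContinuousOn.log (by fun_prop) ?_)
      intro x hx; exact (hpb x hx).ne'
  · intro x hx
    exact (hder x hx).differentiableAt.differentiableWithinAt
  · intro x hx y hy hxy
    rw [(hder x hx).deriv, (hder y hy).deriv]
    rw [interior_Ici] at hx hy
    have hax := hpa x hx.le; have hbx := hpb x hx.le
    have hay := hpa y hy.le; have hby := hpb y hy.le
    have e1 : ∀ z : ℝ, 0 < a * z + c → 0 < b * z + c →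
        a / (a * z + c) - b / (b * z + c) = c * (a - b) / ((a * z + c) * (b * z + c)) := by
      intro z h1 h2; rw [div_sub_div _ _ h1.ne' h2.ne']; ring
    rw [e1 x hax hbx, e1 y hay hby]
    simp only [Set.mem_Ioi] at hx hy
    have hxx : x * x ≤ y * y := mul_le_mul hxy hxy (le_of_lt hx) (le_of_lt (lt_of_lt_of_le hx hxy))
    have h1 : a * b * (x * x) ≤ a * b * (y * y) :=
      mul_le_mul_of_nonneg_left hxx (mul_pos ha hb).le
    have h2 : (a + b) * c * x ≤ (a + b) * c * y :=
      mul_le_mul_of_nonneg_left hxy (by positivity)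
    apply div_le_div_of_nonneg_left (by nlinarith) (by positivity)
    nlinarith

lemma aux_concaveOn_sum {ι : Type*} (t : Finset ι) {s : Set ℝ} (hs : Convex ℝ s)
    (f : ι → ℝ → ℝ) (h : ∀ i ∈ t, ConcaveOn ℝ s (f i)) :
    ConcaveOn ℝ s (fun x => ∑ i ∈ t, f i x) := by
  classical
  induction t using Finset.induction_on with
  | empty => simpa using concaveOn_const 0 hs
  | @insert a t hnot ih =>
    have h1 : ConcaveOn ℝ s (f a) := h a (Finset.mem_insert_self a t)
    have h2 : ConcaveOn ℝ s (fun x => ∑ i ∈ t, f i x) :=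
      ih fun i hi => h i (Finset.mem_insert_of_mem hi)
    have := h1.add h2
    simpa [Finset.sum_insert hnot, Pi.add_def] using this

/-- Strict concavity of the numerator `N(θ)` of the energy efficiency after substituting
the optimal power allocation `a*(θ)` of Theorem 2:
`N(θ) = log₂(C_1 θ + σ²) + ∑_{k=1}^{K−1} [log₂(C_{k+1} x*_k(θ) + σ²) − log₂(C_k x*_k(θ) + σ²)]`
is strictly concave on every interval contained in
`{θ : θ > 0 and x*_k(θ) ≥ 0 for all 1 ≤ k ≤ K−1}`. -/
theorem stmt_13 (K : ℕ) (hK : 2 ≤ K) (σ2 : ℝ) (hσ : 0 < σ2)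
    (C : ℕ → ℝ)
    (hCpos : ∀ k ∈ Finset.Icc 1 K, 0 < C k)
    (hCmono : ∀ k ∈ Finset.Icc 1 (K - 1), C k ≤ C (k + 1))
    (D : ℕ → ℝ) (hD : ∀ k ∈ Finset.Icc 1 K, D k ∈ Set.Ioo (0 : ℝ) 1)
    (astar : ℝ → ℕ → ℝ)
    (hastar : ∀ θ : ℝ, ∀ k ∈ Finset.Icc 1 (K - 1),
      astar θ k = D k * (θ - ∑ i ∈ Finset.Ico 1 k, astar θ i) + D k * σ2 / C k)
    (hastarK : ∀ θ : ℝ, astar θ K = θ - ∑ i ∈ Finset.Ico 1 K, astar θ i)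
    (xstar : ℝ → ℕ → ℝ)
    (hxstar : ∀ θ k, xstar θ k = ∑ i ∈ Finset.Ioc k K, astar θ i)
    (N : ℝ → ℝ)
    (hN : ∀ θ : ℝ, N θ = Real.logb 2 (C 1 * θ + σ2) +
      ∑ k ∈ Finset.Icc 1 (K - 1),
        (Real.logb 2 (C (k + 1) * xstar θ k + σ2) -
          Real.logb 2 (C k * xstar θ k + σ2)))
    (I : Set ℝ) (hIconv : Convex ℝ I)
    (hI : I ⊆ {θ : ℝ | 0 < θ ∧ ∀ k ∈ Finset.Icc 1 (K - 1), 0 ≤ xstar θ k}) :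
    StrictConcaveOn ℝ I N := by
  classical
  have h2 : (0:ℝ) < Real.log 2 := Real.log_pos one_lt_two
  have hC1 : 0 < C 1 := hCpos 1 (by simp only [Finset.mem_Icc]; omega)
  -- xstar in terms of an initial-segment sum
  have hxs : ∀ k ∈ Finset.Icc 1 (K-1), ∀ θ : ℝ,
      xstar θ k = θ - ∑ i ∈ Finset.Ico 1 (k+1), astar θ i := by
    intro k hk θ
    simp only [Finset.mem_Icc] at hk
    have hk1 : k + 1 ≤ K := by omega
    rw [hxstar]
    have e : Finset.Ioc k K = Finset.Ico (k+1) (K+1) := by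
      ext i; simp only [Finset.mem_Ioc, Finset.mem_Ico]; omega
    rw [e, Finset.sum_Ico_succ_top hk1, hastarK]
    have hcons := Finset.sum_Ico_consecutive (fun i => astar θ i)
      (by omega : 1 ≤ k+1) hk1
    linarith [hcons]
  -- affinity of θ ↦ θ - ∑_{i<k+1} astar θ i
  have haff : ∀ k : ℕ, k ≤ K - 1 →
      ∃ p q : ℝ, ∀ θ : ℝ, θ - ∑ i ∈ Finset.Ico 1 (k+1), astar θ i = p * θ + q := by
    intro k
    induction k with
    | zero => exact fun _ => ⟨1, 0, fun θ => by simp⟩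
    | succ k ih =>
      intro hk
      obtain ⟨p, q, hpq⟩ := ih (by omega)
      have hmem : (k+1) ∈ Finset.Icc 1 (K-1) := by
        simp only [Finset.mem_Icc]; omega
      refine ⟨(1 - D (k+1)) * p, (1 - D (k+1)) * q - D (k+1) * σ2 / C (k+1), fun θ => ?_⟩
      rw [Finset.sum_Ico_succ_top (by omega : 1 ≤ k+1), hastar θ (k+1) hmem]
      linear_combination (1 - D (k+1)) * (hpq θ)
  -- strict concavity of the first summand
  have hF1 : StrictConcaveOn ℝ I (fun θ => Real.logb 2 (C 1 * θ + σ2)) := by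
    refine ⟨hIconv, fun x hx y hy hxy a b ha hb hab => ?_⟩
    have hx0 := (hI hx).1
    have hy0 := (hI hy).1
    have hu : C 1 * x + σ2 ∈ Set.Ioi (0:ℝ) := by
      simp only [Set.mem_Ioi]; positivity
    have hv : C 1 * y + σ2 ∈ Set.Ioi (0:ℝ) := by
      simp only [Set.mem_Ioi]; positivity
    have huv : C 1 * x + σ2 ≠ C 1 * y + σ2 := by
      intro h; apply hxy
      have : C 1 * x = C 1 * y := by linarith
      exact mul_left_cancel₀ (ne_of_gt hC1) this
    have key := strictConcaveOn_log_Ioi.2 hu hv huv ha hb hab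
    simp only [smul_eq_mul] at key
    have hmix : C 1 * (a * x + b * y) + σ2
        = a * (C 1 * x + σ2) + b * (C 1 * y + σ2) := by
      linear_combination σ2 * hab.symm
    simp only [Real.logb, smul_eq_mul]
    rw [hmix]
    have key2 := div_lt_div_of_pos_right key h2
    convert key2 using 1 <;> ring
  -- each difference term is concave
  have hGk : ∀ k ∈ Finset.Icc 1 (K-1), ConcaveOn ℝ I
      (fun θ => Real.logb 2 (C (k+1) * xstar θ k + σ2)
        - Real.logb 2 (C k * xstar θ k + σ2)) := by
    intro k hk
    have hk' : k ∈ Finset.Icc 1 K := by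
      simp only [Finset.mem_Icc] at hk ⊢; omega
    have hCk : 0 < C k := hCpos k hk'
    have hCk1 : C k ≤ C (k+1) := hCmono k hk
    obtain ⟨p, q, hpq⟩ := haff k (by simp only [Finset.mem_Icc] at hk; omega)
    have hxaff : ∀ θ : ℝ, xstar θ k = p * θ + q := fun θ => by
      rw [hxs k hk θ]; exact hpq θ
    have hF := aux_concave_diff_log (C (k+1)) (C k) σ2 hCk hCk1 hσ
    refine ⟨hIconv, fun x hx y hy a b ha hb hab => ?_⟩
    have hxk : xstar x k ∈ Set.Ici (0:ℝ) := (hI hx).2 k hk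
    have hyk : xstar y k ∈ Set.Ici (0:ℝ) := (hI hy).2 k hk
    have key := hF.2 hxk hyk ha hb hab
    simp only [smul_eq_mul] at key
    have hmix : xstar (a * x + b * y) k
        = a * xstar x k + b * xstar y k := by
      rw [hxaff, hxaff, hxaff]
      linear_combination q * hab.symm
    simp only [Real.logb, smul_eq_mul]
    rw [hmix]
    have key2 := div_le_div_of_nonneg_right key h2.le
    convert key2 using 1 <;> ring
  have hG : ConcaveOn ℝ I (fun θ => ∑ k ∈ Finset.Icc 1 (K-1),
      (Real.logb 2 (C (k+1) * xstar θ k + σ2)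
        - Real.logb 2 (C k * xstar θ k + σ2))) :=
    aux_concaveOn_sum _ hIconv _ hGk
  have hsum := hF1.add_concaveOn hG
  have hNeq : N = (fun θ => Real.logb 2 (C 1 * θ + σ2)) + (fun θ => ∑ k ∈ Finset.Icc 1 (K-1),
      (Real.logb 2 (C (k+1) * xstar θ k + σ2)
        - Real.logb 2 (C k * xstar θ k + σ2))) := funext fun θ => hN θ
  rw [hNeq]
  exact hsum
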